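/- Let $R$ be a commutative Noetherian ring, let $I_1, I_2 \subseteq R$ be ideals, and let $F_1, F_2 \in R$ with $F_1 \in I_2$ and $F_2 \in I_1$. Then $\sqrt{F_1 I_1 + F_2 I_2} = \sqrt{I_1} \cap \sqrt{I_2} \cap \sqrt{(F_1, F_2)}$. Equivalently, a prime ideal $\mathfrak{p}$ contains $F_1 I_1 + F_2 I_2$ if and only if $\mathfrak{p} \supseteq I_1$, or $\mathfrak{p} \supseteq I_2$, or $\mathfrak{p} \supseteq (F_1, F_2)$. -/

import Mathlib

/-- Liaison addition, set-theoretic part: if `F₁ ∈ I₂` and `F₂ ∈ I₁`, then the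
radical of `F₁I₁ + F₂I₂` is `√I₁ ∩ √I₂ ∩ √(F₁, F₂)`. -/
theorem liaison_addition_radical {R : Type*} [CommRing R] [IsNoetherianRing R]
    (I₁ I₂ : Ideal R) (F₁ F₂ : R) (h1 : F₁ ∈ I₂) (h2 : F₂ ∈ I₁) :
    (Ideal.span {F₁} * I₁ + Ideal.span {F₂} * I₂).radical
      = I₁.radical ⊓ I₂.radical ⊓ (Ideal.span {F₁, F₂}).radical := by
  have hs1 : Ideal.span {F₁} ≤ I₂ := Ideal.span_le.mpr (by simpa using h1)
  have hs2 : Ideal.span {F₂} ≤ I₁ := Ideal.span_le.mpr (by simpa using h2)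
  apply le_antisymm
  · refine le_inf (le_inf (Ideal.radical_mono ?_) (Ideal.radical_mono ?_))
      (Ideal.radical_mono ?_)
    · exact sup_le Ideal.mul_le_right (le_trans Ideal.mul_le_left hs2)
    · exact sup_le (le_trans Ideal.mul_le_left hs1) Ideal.mul_le_right
    · refine sup_le (le_trans Ideal.mul_le_left ?_) (le_trans Ideal.mul_le_left ?_)
      · exact Ideal.span_mono (by simp)
      · exact Ideal.span_mono (by simp)
  · have key : I₁ * I₂ * Ideal.span {F₁, F₂}
        ≤ Ideal.span {F₁} * I₁ + Ideal.span {F₂} * I₂ := by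
      rw [show ({F₁, F₂} : Set R) = insert F₁ {F₂} from rfl, Ideal.span_insert, Ideal.mul_sup]
      apply sup_le
      · refine le_trans (le_of_eq ?_) (le_trans (Ideal.mul_le_left
          (J := I₂)) le_sup_left)
        ring
      · refine le_trans (le_of_eq ?_) (le_trans (Ideal.mul_le_left
          (J := I₁)) le_sup_right)
        ring
    calc I₁.radical ⊓ I₂.radical ⊓ (Ideal.span {F₁, F₂}).radical
        = (I₁ * I₂ * Ideal.span {F₁, F₂}).radical := by
          rw [Ideal.radical_mul, Ideal.radical_mul]
      _ ≤ _ := Ideal.radical_mono key
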